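/- Let $\epsilon \in (0, e^{-1})$, $M^* = \lfloor \log(\epsilon^{-1})\rfloor$, $L^* \le \log(\epsilon^{-1})$, and let $(w_m)_{m=1}^{M^*}$ satisfy $w_m \ge 1$ and $\sum_{m=1}^{M^*} w_m^{-1} \le K$. Set $\epsilon_m^2 = w_m \epsilon^2$ and $N_{m,\ell} = \lceil \epsilon_m^{-2}(L^*+1) h_\ell\rceil$ with $h_\ell = T2^{-\ell}$, $T \le 1/2$. Then the total cost $C = \sum_{\ell=0}^{L^*} h_\ell^{-1} N_{1,\ell} + \sum_{m=2}^{M^*}\sum_{\ell=0}^{L^*} h_\ell^{-1} N_{m,\ell} \sum_{\ell'=0}^{L^*} N_{m-1,\ell'}$ satisfies $C \le c\, \epsilon^{-4} |\log \epsilon|^3$ for a constant $c$ independent of $\epsilon$. -/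

import Mathlib

open Finset

set_option maxHeartbeats 1000000

/-- Cost bound for the iterated MLMC particle system: with `M* = ⌊log ε⁻¹⌋`
Picard steps, `L* ≤ log ε⁻¹` levels, weights `w_m ≥ 1` with `∑ w_m⁻¹ ≤ K`,
sample sizes `N_{m,ℓ} = ⌈(w_m ε²)⁻¹ (L*+1) h_ℓ⌉` and `h_ℓ = T2^{-ℓ}` (`T ≤ 1/2`),
the total nested cost is of order `ε⁻⁴ |log ε|³`. -/
theorem stmt_13 (T K : ℝ) (hT : 0 < T) (hT2 : T ≤ 1 / 2) (hK : 0 < K) :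
    ∃ c : ℝ, ∀ ε : ℝ, 0 < ε → ε < (Real.exp 1)⁻¹ →
      ∀ L : ℕ, (L : ℝ) ≤ Real.log ε⁻¹ →
      ∀ w : ℕ → ℝ, (∀ m, 1 ≤ w m) →
      (∑ m ∈ Finset.Icc 1 ⌊Real.log ε⁻¹⌋₊, (w m)⁻¹ ≤ K) →
      (∑ ℓ ∈ Finset.range (L + 1), (T * 2 ^ (-(ℓ : ℤ)))⁻¹ *
            (⌈(w 1 * ε ^ 2)⁻¹ * ((L : ℝ) + 1) * (T * 2 ^ (-(ℓ : ℤ)))⌉₊ : ℝ))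
        + ∑ m ∈ Finset.Icc 2 ⌊Real.log ε⁻¹⌋₊, ∑ ℓ ∈ Finset.range (L + 1),
            (T * 2 ^ (-(ℓ : ℤ)))⁻¹ *
              (⌈(w m * ε ^ 2)⁻¹ * ((L : ℝ) + 1) * (T * 2 ^ (-(ℓ : ℤ)))⌉₊ : ℝ) *
              ∑ ℓ' ∈ Finset.range (L + 1),
                (⌈(w (m - 1) * ε ^ 2)⁻¹ * ((L : ℝ) + 1) * (T * 2 ^ (-(ℓ' : ℤ)))⌉₊ : ℝ)
      ≤ c * ε⁻¹ ^ 4 * |Real.log ε| ^ 3 := by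
  refine ⟨4 + 6 * T⁻¹ + 16 * K + 4 * T⁻¹ * K, ?_⟩
  intro ε hε hεe L hL w hw hwK
  have hTinv : (0:ℝ) < T⁻¹ := inv_pos.2 hT
  have hexp1 : (1:ℝ) < Real.exp 1 := by
    have := Real.exp_one_gt_d9; linarith
  have hε1 : ε < 1 := hεe.trans (by
    rw [inv_lt_one_iff₀]; right; exact hexp1)
  have hεinv1 : (1:ℝ) < ε⁻¹ := (one_lt_inv₀ hε).2 hε1
  have hεinv0 : (0:ℝ) < ε⁻¹ := inv_pos.2 hε
  set A := Real.log ε⁻¹ with hAdef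
  have hexpinv : Real.exp 1 < ε⁻¹ := by
    have := inv_strictAnti₀ hε hεe
    rwa [inv_inv] at this
  have hA1 : (1:ℝ) < A := by
    calc (1:ℝ) = Real.log (Real.exp 1) := (Real.log_exp 1).symm
    _ < A := Real.log_lt_log (Real.exp_pos 1) hexpinv
  have habs : |Real.log ε| = A := by
    rw [hAdef, Real.log_inv, abs_of_neg (Real.log_neg hε hε1)]
  set M := ⌊A⌋₊ with hMdef
  have hMA : (M:ℝ) ≤ A := Nat.floor_le (by linarith)
  have hM1 : 1 ≤ M := Nat.le_floor (by push_cast; linarith)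
  set B := (L:ℝ) + 1 with hBdef
  have hB1 : (1:ℝ) ≤ B := by
    have : (0:ℝ) ≤ (L:ℝ) := Nat.cast_nonneg L
    rw [hBdef]; linarith
  have hB2A : B ≤ 2 * A := by rw [hBdef]; linarith
  set E := ε⁻¹ ^ 2 with hEdef
  have hE1 : (1:ℝ) ≤ E := one_le_pow₀ hεinv1.le
  have hEpos : (0:ℝ) < E := by positivity
  -- h_ℓ facts
  have hzpow : ∀ ℓ : ℕ, (2:ℝ) ^ (-(ℓ:ℤ)) = ((2:ℝ) ^ ℓ)⁻¹ := by
    intro ℓ; rw [zpow_neg, zpow_natCast]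
  have hhpos : ∀ ℓ : ℕ, (0:ℝ) < T * 2 ^ (-(ℓ:ℤ)) := by
    intro ℓ; positivity
  have h2L : (2:ℝ) ^ L ≤ ε⁻¹ := by
    have hlog : Real.log ((2:ℝ) ^ L) ≤ A := by
      rw [Real.log_pow]
      have h2 : Real.log 2 ≤ 1 := by
        have := Real.log_two_lt_d9; linarith
      calc (L:ℝ) * Real.log 2 ≤ (L:ℝ) * 1 :=
            mul_le_mul_of_nonneg_left h2 (Nat.cast_nonneg L)
        _ = (L:ℝ) := mul_one _
        _ ≤ A := hL
    calc (2:ℝ) ^ L = Real.exp (Real.log ((2:ℝ)^L)) :=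
          (Real.exp_log (by positivity)).symm
      _ ≤ Real.exp A := Real.exp_le_exp.2 hlog
      _ = ε⁻¹ := Real.exp_log hεinv0
  have hgeom1 : ∑ ℓ ∈ range (L+1), (2:ℝ) ^ ℓ ≤ 2 * ε⁻¹ := by
    rw [geom_sum_eq (by norm_num : (2:ℝ) ≠ 1)]
    have : (2:ℝ) ^ (L+1) = 2 * 2 ^ L := by ring
    rw [this]
    have : (2:ℝ) ^ L ≤ ε⁻¹ := h2L
    norm_num; linarith
  have hgeom2 : ∑ ℓ ∈ range (L+1), ((2:ℝ) ^ ℓ)⁻¹ ≤ 2 := by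
    have := sum_geometric_two_le (L+1)
    have heq : ∀ ℓ : ℕ, ((2:ℝ) ^ ℓ)⁻¹ = (1/(2:ℝ)) ^ ℓ := by
      intro ℓ; rw [one_div, inv_pow]
    calc ∑ ℓ ∈ range (L+1), ((2:ℝ) ^ ℓ)⁻¹
        = ∑ ℓ ∈ range (L+1), (1/(2:ℝ)) ^ ℓ := by
          exact Finset.sum_congr rfl fun ℓ _ => heq ℓ
      _ ≤ 2 := this
  -- ceil bound
  have hwpos : ∀ m, (0:ℝ) < w m := fun m => lt_of_lt_of_le one_pos (hw m)
  have hinvsplit : ∀ m, (w m * ε ^ 2)⁻¹ = (w m)⁻¹ * E := by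
    intro m; rw [mul_inv, hEdef, inv_pow]
  have hxnn : ∀ m (ℓ:ℕ), 0 ≤ (w m * ε ^ 2)⁻¹ * ((L : ℝ) + 1) * (T * 2 ^ (-(ℓ : ℤ))) := by
    intro m ℓ
    have := (hwpos m); positivity
  have hceil : ∀ m (ℓ:ℕ),
      (⌈(w m * ε ^ 2)⁻¹ * ((L : ℝ) + 1) * (T * 2 ^ (-(ℓ : ℤ)))⌉₊ : ℝ)
        ≤ (w m * ε ^ 2)⁻¹ * ((L : ℝ) + 1) * (T * 2 ^ (-(ℓ : ℤ))) + 1 :=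
    fun m ℓ => (Nat.ceil_lt_add_one (hxnn m ℓ)).le
  -- the S bound
  have hS : ∀ m, (∑ ℓ ∈ range (L + 1), (T * 2 ^ (-(ℓ : ℤ)))⁻¹ *
        (⌈(w m * ε ^ 2)⁻¹ * ((L : ℝ) + 1) * (T * 2 ^ (-(ℓ : ℤ)))⌉₊ : ℝ))
      ≤ B^2 * (w m)⁻¹ * E + 2 * T⁻¹ * ε⁻¹ := by
    intro m
    have step : ∀ ℓ ∈ range (L+1),
        (T * 2 ^ (-(ℓ : ℤ)))⁻¹ *
          (⌈(w m * ε ^ 2)⁻¹ * ((L : ℝ) + 1) * (T * 2 ^ (-(ℓ : ℤ)))⌉₊ : ℝ)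
        ≤ (w m)⁻¹ * E * B + T⁻¹ * 2 ^ ℓ := by
      intro ℓ _
      have h1 : (T * 2 ^ (-(ℓ : ℤ)))⁻¹ *
          (⌈(w m * ε ^ 2)⁻¹ * ((L : ℝ) + 1) * (T * 2 ^ (-(ℓ : ℤ)))⌉₊ : ℝ)
          ≤ (T * 2 ^ (-(ℓ : ℤ)))⁻¹ *
            ((w m * ε ^ 2)⁻¹ * ((L : ℝ) + 1) * (T * 2 ^ (-(ℓ : ℤ))) + 1) :=
        mul_le_mul_of_nonneg_left (hceil m ℓ) (inv_nonneg.2 (hhpos ℓ).le)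
      refine h1.trans_eq ?_
      have hne : (T * 2 ^ (-(ℓ : ℤ))) ≠ 0 := (hhpos ℓ).ne'
      rw [hzpow ℓ] at hne ⊢
      rw [hinvsplit m]
      have e1 : ((2:ℝ)^ℓ) ≠ 0 := by positivity
      rw [mul_inv, inv_inv]
      calc T⁻¹ * 2^ℓ * ((w m)⁻¹ * E * ((L:ℝ)+1) * (T * ((2:ℝ)^ℓ)⁻¹) + 1)
          = (w m)⁻¹ * E * ((L:ℝ)+1) * (T⁻¹*T) * (((2:ℝ)^ℓ)⁻¹ * 2^ℓ) + T⁻¹ * 2^ℓ := by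
            ring
        _ = (w m)⁻¹ * E * B + T⁻¹ * 2 ^ ℓ := by
            rw [inv_mul_cancel₀ hT.ne', inv_mul_cancel₀ e1, hBdef]; ring
    calc (∑ ℓ ∈ range (L + 1), (T * 2 ^ (-(ℓ : ℤ)))⁻¹ *
          (⌈(w m * ε ^ 2)⁻¹ * ((L : ℝ) + 1) * (T * 2 ^ (-(ℓ : ℤ)))⌉₊ : ℝ))
        ≤ ∑ ℓ ∈ range (L+1), ((w m)⁻¹ * E * B + T⁻¹ * 2 ^ ℓ) := sum_le_sum step
      _ = B * ((w m)⁻¹ * E * B) + T⁻¹ * ∑ ℓ ∈ range (L+1), (2:ℝ) ^ ℓ := by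
          rw [sum_add_distrib, sum_const, card_range, ← mul_sum]
          push_cast [hBdef]; ring
      _ ≤ B * ((w m)⁻¹ * E * B) + T⁻¹ * (2 * ε⁻¹) := by
          have h0 : 0 ≤ T⁻¹ := hTinv.le
          nlinarith [hgeom1]
      _ = B^2 * (w m)⁻¹ * E + 2 * T⁻¹ * ε⁻¹ := by ring
  -- the P bound
  have hP : ∀ m, (∑ ℓ' ∈ range (L + 1),
        (⌈(w m * ε ^ 2)⁻¹ * ((L : ℝ) + 1) * (T * 2 ^ (-(ℓ' : ℤ)))⌉₊ : ℝ))
      ≤ B * ((w m)⁻¹ * E + 1) := by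
    intro m
    have step : ∀ ℓ ∈ range (L+1),
        (⌈(w m * ε ^ 2)⁻¹ * ((L : ℝ) + 1) * (T * 2 ^ (-(ℓ : ℤ)))⌉₊ : ℝ)
        ≤ (w m)⁻¹ * E * B * T * ((2:ℝ)^ℓ)⁻¹ + 1 := by
      intro ℓ _
      refine (hceil m ℓ).trans_eq ?_
      rw [hzpow ℓ, hinvsplit m]; ring
    have hwE : 0 ≤ (w m)⁻¹ * E * B :=
      mul_nonneg (mul_nonneg (inv_nonneg.2 (lt_of_lt_of_le one_pos (hw m)).le) hEpos.le)
        (by positivity)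
    calc (∑ ℓ' ∈ range (L + 1),
          (⌈(w m * ε ^ 2)⁻¹ * ((L : ℝ) + 1) * (T * 2 ^ (-(ℓ' : ℤ)))⌉₊ : ℝ))
        ≤ ∑ ℓ ∈ range (L+1), ((w m)⁻¹ * E * B * T * ((2:ℝ)^ℓ)⁻¹ + 1) := sum_le_sum step
      _ = (w m)⁻¹ * E * B * T * (∑ ℓ ∈ range (L+1), ((2:ℝ)^ℓ)⁻¹) + B := by
          rw [sum_add_distrib, sum_const, card_range, ← mul_sum]
          push_cast [hBdef]; ring
      _ ≤ (w m)⁻¹ * E * B * T * 2 + B := by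
          nlinarith [hgeom2, mul_nonneg hwE hT.le]
      _ ≤ B * ((w m)⁻¹ * E + 1) := by nlinarith [hwE]
  -- weight sums
  have hwinv_nn : ∀ m, (0:ℝ) ≤ (w m)⁻¹ := fun m => (inv_pos.2 (hwpos m)).le
  have hwinv_le1 : ∀ m, (w m)⁻¹ ≤ 1 := fun m => inv_le_one_of_one_le₀ (hw m)
  have hsub : Icc 2 M ⊆ Icc 1 M := Icc_subset_Icc_left (by norm_num)
  have hsum_u : ∑ m ∈ Icc 2 M, (w m)⁻¹ ≤ K :=
    le_trans (sum_le_sum_of_subset_of_nonneg hsub fun i _ _ => hwinv_nn i) hwK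
  have hsum_uv : ∑ m ∈ Icc 2 M, (w m)⁻¹ * (w (m-1))⁻¹ ≤ K := by
    refine le_trans (sum_le_sum fun m _ => ?_) hsum_u
    exact mul_le_of_le_one_right (hwinv_nn m) (hwinv_le1 _)
  have hsum_v : ∑ m ∈ Icc 2 M, (w (m-1))⁻¹ ≤ K := by
    have himg : Icc 2 M = image (· + 1) (Icc 1 (M-1)) := by
      rw [Finset.image_add_right_Icc]
      congr 1
      omega
    rw [himg, Finset.sum_image (by intro a _ b _ h; exact Nat.add_right_cancel h)]
    simp only [Nat.add_sub_cancel]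
    refine le_trans (sum_le_sum_of_subset_of_nonneg ?_ fun i _ _ => hwinv_nn i) hwK
    exact Icc_subset_Icc_right (by omega)
  have hcard : ((Icc 2 M).card : ℝ) ≤ A := by
    have : (Icc 2 M).card ≤ M := by rw [Nat.card_Icc]; omega
    calc ((Icc 2 M).card : ℝ) ≤ (M:ℝ) := Nat.cast_le.2 this
      _ ≤ A := hMA
  -- assemble
  have hPnn : ∀ m, (0:ℝ) ≤ ∑ ℓ' ∈ range (L + 1),
      (⌈(w m * ε ^ 2)⁻¹ * ((L : ℝ) + 1) * (T * 2 ^ (-(ℓ' : ℤ)))⌉₊ : ℝ) :=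
    fun m => sum_nonneg fun ℓ _ => Nat.cast_nonneg _
  have hmain : ∀ m ∈ Icc 2 M,
      (∑ ℓ ∈ range (L + 1), (T * 2 ^ (-(ℓ : ℤ)))⁻¹ *
          (⌈(w m * ε ^ 2)⁻¹ * ((L : ℝ) + 1) * (T * 2 ^ (-(ℓ : ℤ)))⌉₊ : ℝ) *
          ∑ ℓ' ∈ range (L + 1),
            (⌈(w (m - 1) * ε ^ 2)⁻¹ * ((L : ℝ) + 1) * (T * 2 ^ (-(ℓ' : ℤ)))⌉₊ : ℝ))
      ≤ B^3 * E^2 * ((w m)⁻¹ * (w (m-1))⁻¹) + B^3 * E * (w m)⁻¹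
        + 2*T⁻¹*ε⁻¹*B*E * (w (m-1))⁻¹ + 2*T⁻¹*ε⁻¹*B := by
    intro m _
    rw [← Finset.sum_mul]
    have h1 := hS m
    have h2 := hP (m-1)
    have hfnn : (0:ℝ) ≤ B^2 * (w m)⁻¹ * E + 2 * T⁻¹ * ε⁻¹ :=
      add_nonneg (mul_nonneg (mul_nonneg (by positivity) (hwinv_nn m)) hEpos.le)
        (by positivity)
    calc (∑ ℓ ∈ range (L + 1), (T * 2 ^ (-(ℓ : ℤ)))⁻¹ *
          (⌈(w m * ε ^ 2)⁻¹ * ((L : ℝ) + 1) * (T * 2 ^ (-(ℓ : ℤ)))⌉₊ : ℝ)) *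
          (∑ ℓ' ∈ range (L + 1),
            (⌈(w (m - 1) * ε ^ 2)⁻¹ * ((L : ℝ) + 1) * (T * 2 ^ (-(ℓ' : ℤ)))⌉₊ : ℝ))
        ≤ (B^2 * (w m)⁻¹ * E + 2 * T⁻¹ * ε⁻¹) * (B * ((w (m-1))⁻¹ * E + 1)) :=
          mul_le_mul h1 h2 (hPnn (m-1)) hfnn
      _ = B^3 * E^2 * ((w m)⁻¹ * (w (m-1))⁻¹) + B^3 * E * (w m)⁻¹
          + 2*T⁻¹*ε⁻¹*B*E * (w (m-1))⁻¹ + 2*T⁻¹*ε⁻¹*B := by ring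
  -- sum the middle bound
  have hdouble : (∑ m ∈ Icc 2 M, ∑ ℓ ∈ range (L + 1),
        (T * 2 ^ (-(ℓ : ℤ)))⁻¹ *
          (⌈(w m * ε ^ 2)⁻¹ * ((L : ℝ) + 1) * (T * 2 ^ (-(ℓ : ℤ)))⌉₊ : ℝ) *
          ∑ ℓ' ∈ range (L + 1),
            (⌈(w (m - 1) * ε ^ 2)⁻¹ * ((L : ℝ) + 1) * (T * 2 ^ (-(ℓ' : ℤ)))⌉₊ : ℝ))
      ≤ B^3 * E^2 * K + B^3 * E * K + 2*T⁻¹*ε⁻¹*B*E * K + 2*T⁻¹*ε⁻¹*B * A := by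
    calc (∑ m ∈ Icc 2 M, ∑ ℓ ∈ range (L + 1),
          (T * 2 ^ (-(ℓ : ℤ)))⁻¹ *
            (⌈(w m * ε ^ 2)⁻¹ * ((L : ℝ) + 1) * (T * 2 ^ (-(ℓ : ℤ)))⌉₊ : ℝ) *
            ∑ ℓ' ∈ range (L + 1),
              (⌈(w (m - 1) * ε ^ 2)⁻¹ * ((L : ℝ) + 1) * (T * 2 ^ (-(ℓ' : ℤ)))⌉₊ : ℝ))
        ≤ ∑ m ∈ Icc 2 M, (B^3 * E^2 * ((w m)⁻¹ * (w (m-1))⁻¹) + B^3 * E * (w m)⁻¹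
          + 2*T⁻¹*ε⁻¹*B*E * (w (m-1))⁻¹ + 2*T⁻¹*ε⁻¹*B) := sum_le_sum hmain
      _ = B^3 * E^2 * (∑ m ∈ Icc 2 M, (w m)⁻¹ * (w (m-1))⁻¹)
          + B^3 * E * (∑ m ∈ Icc 2 M, (w m)⁻¹)
          + 2*T⁻¹*ε⁻¹*B*E * (∑ m ∈ Icc 2 M, (w (m-1))⁻¹)
          + 2*T⁻¹*ε⁻¹*B * ((Icc 2 M).card : ℝ) := by
          rw [sum_add_distrib, sum_add_distrib, sum_add_distrib, sum_const,
            ← mul_sum, ← mul_sum, ← mul_sum, nsmul_eq_mul]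
          ring
      _ ≤ B^3 * E^2 * K + B^3 * E * K + 2*T⁻¹*ε⁻¹*B*E * K + 2*T⁻¹*ε⁻¹*B * A := by
          have c1 : (0:ℝ) ≤ B^3 * E^2 := by positivity
          have c2 : (0:ℝ) ≤ B^3 * E := by positivity
          have c3 : (0:ℝ) ≤ 2*T⁻¹*ε⁻¹*B*E := by positivity
          have c4 : (0:ℝ) ≤ 2*T⁻¹*ε⁻¹*B := by positivity
          gcongr
  -- final numeric bound
  rw [habs]
  have hA0 : (0:ℝ) < A := lt_trans one_pos hA1
  have hB0 : (0:ℝ) ≤ B := by linarith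
  have hε4 : ε⁻¹ ≤ ε⁻¹^4 := by
    calc ε⁻¹ = ε⁻¹^1 := (pow_one _).symm
      _ ≤ ε⁻¹^4 := pow_le_pow_right₀ hεinv1.le (by norm_num)
  have hε34 : ε⁻¹^3 ≤ ε⁻¹^4 := pow_le_pow_right₀ hεinv1.le (by norm_num)
  have hε24 : E ≤ ε⁻¹^4 := by
    rw [hEdef]; exact pow_le_pow_right₀ hεinv1.le (by norm_num)
  have hA3 : A ≤ A^3 := by
    calc A = A^1 := (pow_one _).symm
      _ ≤ A^3 := pow_le_pow_right₀ hA1.le (by norm_num)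
  have hA23 : A^2 ≤ A^3 := pow_le_pow_right₀ hA1.le (by norm_num)
  have hA3one : (1:ℝ) ≤ A^3 := one_le_pow₀ hA1.le
  have hε40 : (0:ℝ) < ε⁻¹^4 := by positivity
  have hP0 : (0:ℝ) ≤ ε⁻¹^4 * A^3 := by positivity
  have hB2 : B^2 ≤ 4*A^2 := by
    have := pow_le_pow_left₀ hB0 hB2A 2
    calc B^2 ≤ (2*A)^2 := this
      _ = 4*A^2 := by ring
  have hB3 : B^3 ≤ 8*A^3 := by
    have := pow_le_pow_left₀ hB0 hB2A 3
    calc B^3 ≤ (2*A)^3 := this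
      _ = 8*A^3 := by ring
  have key1 : B^2 * (w 1)⁻¹ * E + 2 * T⁻¹ * ε⁻¹ ≤ (4 + 2*T⁻¹) * (ε⁻¹^4 * A^3) := by
    have e1 : B^2 * (w 1)⁻¹ * E ≤ 4 * (ε⁻¹^4 * A^3) := by
      calc B^2 * (w 1)⁻¹ * E ≤ B^2 * 1 * E := by
            apply mul_le_mul_of_nonneg_right _ hEpos.le
            exact mul_le_mul_of_nonneg_left (hwinv_le1 1) (by positivity)
        _ = B^2 * E := by ring
        _ ≤ (4*A^2) * ε⁻¹^4 := mul_le_mul hB2 hε24 hEpos.le (by positivity)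
        _ ≤ (4*A^3) * ε⁻¹^4 := by
            apply mul_le_mul_of_nonneg_right _ hε40.le
            linarith
        _ = 4 * (ε⁻¹^4 * A^3) := by ring
    have e2 : 2 * T⁻¹ * ε⁻¹ ≤ 2 * T⁻¹ * (ε⁻¹^4 * A^3) := by
      apply mul_le_mul_of_nonneg_left _ (by positivity)
      calc ε⁻¹ = ε⁻¹ * 1 := (mul_one _).symm
        _ ≤ ε⁻¹^4 * A^3 := mul_le_mul hε4 hA3one one_pos.le hε40.le
    calc B^2 * (w 1)⁻¹ * E + 2 * T⁻¹ * ε⁻¹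
        ≤ 4 * (ε⁻¹^4 * A^3) + 2 * T⁻¹ * (ε⁻¹^4 * A^3) := add_le_add e1 e2
      _ = (4 + 2*T⁻¹) * (ε⁻¹^4 * A^3) := by ring
  have key2 : B^3 * E^2 * K ≤ 8*K * (ε⁻¹^4 * A^3) := by
    have hE2 : E^2 = ε⁻¹^4 := by rw [hEdef]; ring
    calc B^3 * E^2 * K = B^3 * (ε⁻¹^4 * K) := by rw [hE2]; ring
      _ ≤ (8*A^3) * (ε⁻¹^4 * K) := mul_le_mul_of_nonneg_right hB3 (by positivity)
      _ = 8*K * (ε⁻¹^4 * A^3) := by ring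
  have key3 : B^3 * E * K ≤ 8*K * (ε⁻¹^4 * A^3) := by
    calc B^3 * E * K ≤ ((8*A^3) * ε⁻¹^4) * K := by
          apply mul_le_mul_of_nonneg_right _ hK.le
          exact mul_le_mul hB3 hε24 hEpos.le (by positivity)
      _ = 8*K * (ε⁻¹^4 * A^3) := by ring
  have key4 : 2*T⁻¹*ε⁻¹*B*E * K ≤ 4*T⁻¹*K * (ε⁻¹^4 * A^3) := by
    have h1 : ε⁻¹ * E ≤ ε⁻¹^4 := by
      rw [hEdef]
      calc ε⁻¹ * ε⁻¹^2 = ε⁻¹^3 := by ring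
        _ ≤ ε⁻¹^4 := hε34
    have h2 : (ε⁻¹ * E) * B ≤ ε⁻¹^4 * (2*A^3) := by
      refine mul_le_mul h1 (hB2A.trans (by linarith)) hB0 hε40.le
    calc 2*T⁻¹*ε⁻¹*B*E * K = (2*T⁻¹*K) * ((ε⁻¹ * E) * B) := by ring
      _ ≤ (2*T⁻¹*K) * (ε⁻¹^4 * (2*A^3)) := mul_le_mul_of_nonneg_left h2 (by positivity)
      _ = 4*T⁻¹*K * (ε⁻¹^4 * A^3) := by ring
  have key5 : 2*T⁻¹*ε⁻¹*B * A ≤ 4*T⁻¹ * (ε⁻¹^4 * A^3) := by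
    have h2 : (ε⁻¹ * B) * A ≤ (ε⁻¹^4 * (2*A)) * A := by
      apply mul_le_mul_of_nonneg_right _ hA0.le
      exact mul_le_mul hε4 hB2A hB0 hε40.le
    have h3 : (ε⁻¹^4 * (2*A)) * A = 2 * (ε⁻¹^4 * A^2) := by ring
    have h4 : ε⁻¹^4 * A^2 ≤ ε⁻¹^4 * A^3 := mul_le_mul_of_nonneg_left hA23 hε40.le
    calc 2*T⁻¹*ε⁻¹*B * A = (2*T⁻¹) * ((ε⁻¹ * B) * A) := by ring
      _ ≤ (2*T⁻¹) * (2 * (ε⁻¹^4 * A^2)) := by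
          apply mul_le_mul_of_nonneg_left _ (by positivity)
          rw [← h3]; exact h2
      _ ≤ (2*T⁻¹) * (2 * (ε⁻¹^4 * A^3)) := by
          apply mul_le_mul_of_nonneg_left _ (by positivity)
          linarith
      _ = 4*T⁻¹ * (ε⁻¹^4 * A^3) := by ring
  calc (∑ ℓ ∈ Finset.range (L + 1), (T * 2 ^ (-(ℓ : ℤ)))⁻¹ *
            (⌈(w 1 * ε ^ 2)⁻¹ * ((L : ℝ) + 1) * (T * 2 ^ (-(ℓ : ℤ)))⌉₊ : ℝ))
        + ∑ m ∈ Finset.Icc 2 M, ∑ ℓ ∈ Finset.range (L + 1),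
            (T * 2 ^ (-(ℓ : ℤ)))⁻¹ *
              (⌈(w m * ε ^ 2)⁻¹ * ((L : ℝ) + 1) * (T * 2 ^ (-(ℓ : ℤ)))⌉₊ : ℝ) *
              ∑ ℓ' ∈ Finset.range (L + 1),
                (⌈(w (m - 1) * ε ^ 2)⁻¹ * ((L : ℝ) + 1) * (T * 2 ^ (-(ℓ' : ℤ)))⌉₊ : ℝ)
      ≤ (B^2 * (w 1)⁻¹ * E + 2 * T⁻¹ * ε⁻¹)
        + (B^3 * E^2 * K + B^3 * E * K + 2*T⁻¹*ε⁻¹*B*E * K + 2*T⁻¹*ε⁻¹*B * A) :=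
        add_le_add (hS 1) hdouble
    _ ≤ (4 + 2*T⁻¹) * (ε⁻¹^4 * A^3) + (8*K * (ε⁻¹^4 * A^3) + 8*K * (ε⁻¹^4 * A^3)
        + 4*T⁻¹*K * (ε⁻¹^4 * A^3) + 4*T⁻¹ * (ε⁻¹^4 * A^3)) := by
        exact add_le_add key1 (add_le_add (add_le_add (add_le_add key2 key3) key4) key5)
    _ = (4 + 6 * T⁻¹ + 16 * K + 4 * T⁻¹ * K) * ε⁻¹ ^ 4 * A ^ 3 := by ring
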